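/- (Single-step potential decrease for weak-label multicalibration boost.) Let μ be a probability measure on a measurable space 𝒳, let f, f★ : 𝒳 → [0,1] be measurable, let ε > 0, τ ∈ {−1, +1}, and let c : 𝒳 → [−1,1] and w : [0,1] → [−1,1] be measurable with τ·∫ c(x)·w(f(x))·(f★(x) − f(x)) dμ(x) ≥ ε/2. Define the updated predictor f'(x) := min(1, max(0, f(x) + (ε/2)·τ·c(x)·w(f(x)))). Then ∫ (f'(x) − f★(x))² dμ(x) ≤ ∫ (f(x) − f★(x))² dμ(x) − ε²/4. -/

import Mathlib

open MeasureTheory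

lemma clip_sq_le_aux (y b : ℝ) (hb : b ∈ Set.Icc (0:ℝ) 1) :
    (min 1 (max 0 y) - b) ^ 2 ≤ (y - b) ^ 2 := by
  obtain ⟨hb0, hb1⟩ := hb
  rcases le_total y 0 with h | h
  · rw [max_eq_left h, min_eq_right zero_le_one]
    nlinarith
  · rcases le_total y 1 with h1 | h1
    · rw [max_eq_right h, min_eq_right h1]
    · rw [max_eq_right h, min_eq_left h1]
      nlinarith

/-- Single-step potential decrease for weak-label multicalibration boost:
one boosting update along a violated witness decreases the squared distance
to `f★` by at least `ε²/4`. -/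
theorem wlmc_single_step_decrease {X : Type*} [MeasurableSpace X]
    (μ : Measure X) [IsProbabilityMeasure μ]
    (f fstar c : X → ℝ) (w : ℝ → ℝ)
    (hf : Measurable f) (hf01 : ∀ x, f x ∈ Set.Icc (0:ℝ) 1)
    (hfs : Measurable fstar) (hfs01 : ∀ x, fstar x ∈ Set.Icc (0:ℝ) 1)
    (hc : Measurable c) (hc1 : ∀ x, c x ∈ Set.Icc (-1:ℝ) 1)
    (hw : Measurable w) (hw1 : ∀ v ∈ Set.Icc (0:ℝ) 1, w v ∈ Set.Icc (-1:ℝ) 1)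
    (ε : ℝ) (hε : 0 < ε) (τ : ℝ) (hτ : τ = -1 ∨ τ = 1)
    (hgap : ε / 2 ≤ τ * ∫ x, c x * w (f x) * (fstar x - f x) ∂μ) :
    ∫ x, (min 1 (max 0 (f x + ε / 2 * τ * (c x * w (f x)))) - fstar x) ^ 2 ∂μ
      ≤ (∫ x, (f x - fstar x) ^ 2 ∂μ) - ε ^ 2 / 4 := by
  have hτ1 : |τ| = 1 := by rcases hτ with h | h <;> simp [h]
  have hcw : ∀ x, |c x * w (f x)| ≤ 1 := by
    intro x
    rw [abs_mul]
    have h1 := hc1 x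
    have h2 := hw1 (f x) (hf01 x)
    have : |c x| ≤ 1 := abs_le.2 ⟨h1.1, h1.2⟩
    have : |w (f x)| ≤ 1 := abs_le.2 ⟨h2.1, h2.2⟩
    nlinarith [abs_nonneg (c x), abs_nonneg (w (f x))]
  have hηsq : ∀ x, (ε / 2 * τ * (c x * w (f x))) ^ 2 ≤ ε ^ 2 / 4 := by
    intro x
    have h := hcw x
    have h2 : |ε / 2 * τ * (c x * w (f x))| ≤ ε / 2 := by
      rw [abs_mul, abs_mul, hτ1, abs_of_pos (by linarith : (0:ℝ) < ε / 2)]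
      nlinarith [abs_nonneg (c x * w (f x))]
    nlinarith [abs_nonneg (ε / 2 * τ * (c x * w (f x))), sq_abs (ε / 2 * τ * (c x * w (f x)))]
  -- measurability
  have hmcw : Measurable (fun x => c x * w (f x)) := hc.mul (hw.comp hf)
  have hffs : ∀ x, |f x - fstar x| ≤ 1 := by
    intro x
    have h1 := hf01 x
    have h2 := hfs01 x
    rw [abs_le]
    constructor <;> [linarith [h1.1, h2.2]; linarith [h1.2, h2.1]]
  -- integrability
  have hI1 : Integrable (fun x => (f x - fstar x) ^ 2) μ := by
    apply Integrable.mono' (integrable_const (1:ℝ))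
      ((hf.sub hfs).pow_const 2).aestronglyMeasurable
    filter_upwards with x
    rw [Real.norm_eq_abs, abs_of_nonneg (sq_nonneg _)]
    change (f x - fstar x) ^ 2 ≤ 1
    nlinarith [hffs x, sq_abs (f x - fstar x), abs_nonneg (f x - fstar x)]
  have hI2 : Integrable (fun x => c x * w (f x) * (fstar x - f x)) μ := by
    apply Integrable.mono' (integrable_const (1:ℝ))
      (hmcw.mul (hfs.sub hf)).aestronglyMeasurable
    filter_upwards with x
    change ‖c x * w (f x) * (fstar x - f x)‖ ≤ 1
    rw [Real.norm_eq_abs, abs_mul]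
    have h1 := hcw x
    have h2 : |fstar x - f x| ≤ 1 := by rw [abs_sub_comm]; exact hffs x
    nlinarith [abs_nonneg (c x * w (f x)), abs_nonneg (fstar x - f x)]
  have hI3 : Integrable (fun x => (ε / 2 * τ * (c x * w (f x))) ^ 2) μ := by
    apply Integrable.mono' (integrable_const (ε ^ 2 / 4))
      (((measurable_const.mul hmcw).pow_const 2)).aestronglyMeasurable
    filter_upwards with x
    rw [Real.norm_eq_abs, abs_of_nonneg (sq_nonneg _)]
    exact hηsq x
  have hIlhs : Integrable
      (fun x => (min 1 (max 0 (f x + ε / 2 * τ * (c x * w (f x)))) - fstar x) ^ 2) μ := by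
    have hclip : Measurable (fun x => min 1 (max 0 (f x + ε / 2 * τ * (c x * w (f x))))) :=
      Measurable.min measurable_const
        (Measurable.max measurable_const (hf.add (measurable_const.mul hmcw)))
    apply Integrable.mono' (integrable_const (1:ℝ))
    · exact ((hclip.sub hfs).pow_const 2).aestronglyMeasurable
    · filter_upwards with x
      rw [Real.norm_eq_abs, abs_of_nonneg (sq_nonneg _)]
      have h1 : (0:ℝ) ≤ min 1 (max 0 (f x + ε / 2 * τ * (c x * w (f x)))) :=
        le_min zero_le_one (le_max_left _ _)
      have h2 : min 1 (max 0 (f x + ε / 2 * τ * (c x * w (f x)))) ≤ 1 := min_le_left _ _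
      have h3 := hfs01 x
      have : |min 1 (max 0 (f x + ε / 2 * τ * (c x * w (f x)))) - fstar x| ≤ 1 := by
        rw [abs_le]; constructor <;> [linarith [h3.2]; linarith [h3.1]]
      nlinarith [abs_nonneg (min 1 (max 0 (f x + ε / 2 * τ * (c x * w (f x)))) - fstar x),
        sq_abs (min 1 (max 0 (f x + ε / 2 * τ * (c x * w (f x)))) - fstar x)]
  have hIsum : Integrable (fun x => (f x - fstar x) ^ 2
      + (-(ε * τ)) * (c x * w (f x) * (fstar x - f x))
      + (ε / 2 * τ * (c x * w (f x))) ^ 2) μ :=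
    (hI1.add (hI2.const_mul _)).add hI3
  have key : ∫ x, (min 1 (max 0 (f x + ε / 2 * τ * (c x * w (f x)))) - fstar x) ^ 2 ∂μ
      ≤ ∫ x, ((f x - fstar x) ^ 2
        + (-(ε * τ)) * (c x * w (f x) * (fstar x - f x))
        + (ε / 2 * τ * (c x * w (f x))) ^ 2) ∂μ := by
    apply integral_mono hIlhs hIsum
    intro x
    have h := clip_sq_le_aux (f x + ε / 2 * τ * (c x * w (f x))) (fstar x) (hfs01 x)
    calc (min 1 (max 0 (f x + ε / 2 * τ * (c x * w (f x)))) - fstar x) ^ 2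
        ≤ (f x + ε / 2 * τ * (c x * w (f x)) - fstar x) ^ 2 := h
      _ = (f x - fstar x) ^ 2 + (-(ε * τ)) * (c x * w (f x) * (fstar x - f x))
          + (ε / 2 * τ * (c x * w (f x))) ^ 2 := by ring
  have hI2' : Integrable (fun x => -(ε * τ) * (c x * w (f x) * (fstar x - f x))) μ :=
    hI2.const_mul _
  have hIa : Integrable (fun x => (f x - fstar x) ^ 2
      + -(ε * τ) * (c x * w (f x) * (fstar x - f x))) μ := hI1.add hI2'
  rw [integral_add hIa hI3, integral_add hI1 hI2', integral_const_mul] at key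
  have h3bound : ∫ x, (ε / 2 * τ * (c x * w (f x))) ^ 2 ∂μ ≤ ε ^ 2 / 4 := by
    calc ∫ x, (ε / 2 * τ * (c x * w (f x))) ^ 2 ∂μ
        ≤ ∫ _x, ε ^ 2 / 4 ∂μ := integral_mono hI3 (integrable_const _) hηsq
      _ = ε ^ 2 / 4 := by simp
  have hgap' : -(ε * τ) * ∫ x, c x * w (f x) * (fstar x - f x) ∂μ ≤ -(ε ^ 2 / 2) := by
    have : ε / 2 ≤ τ * ∫ x, c x * w (f x) * (fstar x - f x) ∂μ := hgap
    nlinarith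
  linarith
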